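/- Let f(X) = a₀X⁴ + 4a₁X³ + 6a₂X² + 4a₃X + a₄ be a real quartic polynomial and let y be a fixed real number with f(y) ≥ 0. Define, for x ≠ y with f(x) > 0, w(x) = (F₁(x,y) + √(f(x)·f(y)))/(2(x−y)²) where F₁(x,y) = f(y) + (1/2)f'(y)(x−y) + (1/12)f''(y)(x−y)², and A(x,y) = (f(x)/(x−y)³ − f'(x)/(4(x−y)²))·√(f(y)) + (f(y)/(x−y)³ + f'(y)/(4(x−y)²))·√(f(x)). Then at every point x ≠ y with f(x) > 0, the function w is differentiable and w'(x) = −A(x,y)/√(f(x)). -/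

import Mathlib

/-- The substitution function `w(x)` of the Biermann–Weierstrass proof satisfies
`w'(x) = −A(x,y)/√(f(x))` at every point `x ≠ y` with `f(x) > 0`. -/
theorem w_hasDerivAt
    (a₀ a₁ a₂ a₃ a₄ : ℝ)
    (f f' f'' : ℝ → ℝ)
    (hf : f = fun X => a₀ * X ^ 4 + 4 * a₁ * X ^ 3 + 6 * a₂ * X ^ 2 + 4 * a₃ * X + a₄)
    (hf' : f' = fun X => 4 * a₀ * X ^ 3 + 12 * a₁ * X ^ 2 + 12 * a₂ * X + 4 * a₃)
    (hf'' : f'' = fun X => 12 * a₀ * X ^ 2 + 24 * a₁ * X + 12 * a₂)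
    (y : ℝ) (hfy : 0 ≤ f y)
    (w : ℝ → ℝ)
    (hw : w = fun x =>
      (f y + (1 / 2) * f' y * (x - y) + (1 / 12) * f'' y * (x - y) ^ 2
          + Real.sqrt (f x * f y)) / (2 * (x - y) ^ 2))
    (A : ℝ → ℝ)
    (hA : A = fun x =>
      (f x / (x - y) ^ 3 - f' x / (4 * (x - y) ^ 2)) * Real.sqrt (f y)
        + (f y / (x - y) ^ 3 + f' y / (4 * (x - y) ^ 2)) * Real.sqrt (f x)) :
    ∀ x : ℝ, x ≠ y → 0 < f x → HasDerivAt w (-A x / Real.sqrt (f x)) x := by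
  intro x hxy hx
  have hu : x - y ≠ 0 := sub_ne_zero.mpr hxy
  -- derivative of f
  have hfd : HasDerivAt f (f' x) x := by
    rw [hf, hf']
    have h0 := (((((hasDerivAt_pow 4 x).const_mul a₀).add
        ((hasDerivAt_pow 3 x).const_mul (4 * a₁))).add
        ((hasDerivAt_pow 2 x).const_mul (6 * a₂))).add
        ((hasDerivAt_id x).const_mul (4 * a₃))).add_const a₄
    refine HasDerivAt.congr_deriv h0 ?_
    push_cast; ring
  -- derivative of the sqrt part
  have hsq : HasDerivAt (fun x => Real.sqrt (f x * f y))
      (1 / (2 * Real.sqrt (f x * f y)) * (f' x * f y)) x := by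
    rcases eq_or_lt_of_le hfy with h0 | hpos
    · have he : (fun x => Real.sqrt (f x * f y)) = fun _ => (0 : ℝ) := by
        funext z; rw [← h0]; simp
      rw [he, ← h0]
      simpa using hasDerivAt_const x (0 : ℝ)
    · have hne : f x * f y ≠ 0 := (mul_pos hx hpos).ne'
      exact (Real.hasDerivAt_sqrt hne).comp x (hfd.mul_const (f y))
  -- derivative of the polynomial part of the numerator
  have hP : HasDerivAt
      (fun x => f y + 1 / 2 * f' y * (x - y) + 1 / 12 * f'' y * (x - y) ^ 2)
      (1 / 2 * f' y * 1 + 1 / 12 * f'' y * (↑2 * (x - y) ^ 1 * 1)) x := by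
    exact (((hasDerivAt_id x).sub_const y).const_mul (1 / 2 * f' y)).const_add (f y) |>.add
      ((((hasDerivAt_id x).sub_const y).pow 2).const_mul (1 / 12 * f'' y))
  have hN := hP.add hsq
  have hDne : (2 : ℝ) * (x - y) ^ 2 ≠ 0 := by positivity
  have hD : HasDerivAt (fun x => 2 * (x - y) ^ 2) (2 * (↑2 * (x - y) ^ 1 * 1)) x :=
    (((hasDerivAt_id x).sub_const y).pow 2).const_mul 2
  have hW := hN.div hD hDne
  rw [hw]
  refine HasDerivAt.congr_deriv hW ?_
  rw [Pi.add_apply, eq_comm]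
  -- algebraic identity
  have hs2 : Real.sqrt (f x) ^ 2 = f x := Real.sq_sqrt hx.le
  have hs0 : Real.sqrt (f x) ≠ 0 := (Real.sqrt_pos.mpr hx).ne'
  have hst : Real.sqrt (f x * f y) = Real.sqrt (f x) * Real.sqrt (f y) :=
    Real.sqrt_mul hx.le _
  rcases eq_or_lt_of_le hfy with h0 | hpos
  · rw [hA]
    simp only [← h0, Real.sqrt_zero, mul_zero, zero_mul, zero_add, zero_div, add_zero,
      Real.sqrt_mul' _ hx.le]  -- clean up
    field_simp
    ring
  · have ht2 : Real.sqrt (f y) ^ 2 = f y := Real.sq_sqrt hpos.le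
    have ht0 : Real.sqrt (f y) ≠ 0 := (Real.sqrt_pos.mpr hpos).ne'
    simp only [hA]
    rw [hst]
    set s := Real.sqrt (f x) with hsdef
    set t := Real.sqrt (f y) with htdef
    rw [← hs2, ← ht2]
    field_simp
    ring
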